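/- arXiv:1507.03569 — 3 statements merged into one kernel-verified Lean document; each statement's English description precedes it below -/
import Mathlib

section
/- Let k ≥ 0 be an integer and λ ∈ ℝ. Suppose u : ℝ → ℂ is smooth on (−π, π), even, with u(0) = 1, and satisfies u″(r) + 2k·(cos r/sin r)·u′(r) = (λ² + k²)·u(r) for 0 < |r| < π; and suppose v : ℝ → ℂ is smooth on (−π, π), even, with v(0) = 1, and satisfies v″(r) + 2(k+1)·(cos r/sin r)·v′(r) = (λ² + (k+1)²)·v(r) for 0 < |r| < π. Then for all r with 0 < |r| < π: u′(r)/sin r = ((λ² + k²)/(2k+1))·v(r). -/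
open Set Filter Topology

private lemma hasDerivAt_pow_comp {f : ℝ → ℂ} {f' : ℂ} {t : ℝ}
    (h : HasDerivAt f f' t) (n : ℕ) :
    HasDerivAt (fun y => f y ^ (n + 1)) (((n : ℂ) + 1) * f t ^ n * f') t := by
  induction n with
  | zero => simpa using h
  | succ m ih =>
      have h2 := ih.fun_mul h
      have heq : (fun y => f y ^ (m + 1) * f y) = fun y => f y ^ (m + 1 + 1) := by
        funext y; ring
      rw [heq] at h2
      convert h2 using 1
      · rfl
      push_cast
      ring

set_option maxHeartbeats 1000000 in
private theorem stmt_13_aux (k : ℕ) (lam : ℝ) (u v : ℝ → ℂ)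
    (hu : ContDiffOn ℝ (⊤ : ℕ∞) u (Set.Ioo (-Real.pi) Real.pi))
    (hueven : ∀ r : ℝ, u (-r) = u r) (hu0 : u 0 = 1)
    (huode : ∀ r : ℝ, 0 < |r| → |r| < Real.pi →
      deriv (deriv u) r + 2 * (k : ℂ) * ((Real.cos r : ℂ) / (Real.sin r : ℂ)) * deriv u r
        = (((lam : ℂ)) ^ 2 + (k : ℂ) ^ 2) * u r)
    (hv : ContDiffOn ℝ (⊤ : ℕ∞) v (Set.Ioo (-Real.pi) Real.pi))
    (hveven : ∀ r : ℝ, v (-r) = v r) (hv0 : v 0 = 1)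
    (hvode : ∀ r : ℝ, 0 < |r| → |r| < Real.pi →
      deriv (deriv v) r
          + 2 * ((k : ℂ) + 1) * ((Real.cos r : ℂ) / (Real.sin r : ℂ)) * deriv v r
        = (((lam : ℂ)) ^ 2 + ((k : ℂ) + 1) ^ 2) * v r) :
    ∀ r ∈ Set.Ioo 0 Real.pi,
      deriv u r / (Real.sin r : ℂ)
        = ((((lam : ℂ)) ^ 2 + (k : ℂ) ^ 2) / (2 * (k : ℂ) + 1)) * v r := by
  have hpi : (0:ℝ) < Real.pi := Real.pi_pos
  set c0 : ℂ := (lam : ℂ) ^ 2 + (k : ℂ) ^ 2 with hc0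
  set c1 : ℂ := (lam : ℂ) ^ 2 + ((k : ℂ) + 1) ^ 2 with hc1
  set S : ℝ → ℂ := fun t => ((Real.sin t : ℝ) : ℂ) with hSdef
  set Co : ℝ → ℂ := fun t => ((Real.cos t : ℝ) : ℂ) with hCdef
  set w : ℝ → ℂ := fun t => deriv u t / S t with hwdef
  set P : ℝ → ℂ := fun t =>
    c0 * u t / S t - (2 * (k : ℂ) + 1) * (Co t * deriv u t) / (S t) ^ 2 with hPdef
  -- basic
  have hkne : (2 * (k : ℂ) + 1) ≠ 0 := by
    have h : ((2 * (k:ℝ) + 1 : ℝ) : ℂ) ≠ 0 := Complex.ofReal_ne_zero.2 (by positivity)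
    push_cast at h; exact h
  have hSne : ∀ t ∈ Ioo (0:ℝ) Real.pi, S t ≠ 0 := by
    intro t ht
    exact Complex.ofReal_ne_zero.2 (ne_of_gt (Real.sin_pos_of_pos_of_lt_pi ht.1 ht.2))
  have hS : ∀ t : ℝ, HasDerivAt S (Co t) t := fun t =>
    (Real.hasDerivAt_sin t).ofReal_comp
  have hCo : ∀ t : ℝ, HasDerivAt Co (-S t) t := by
    intro t
    have h := (Real.hasDerivAt_cos t).ofReal_comp
    simpa only [Complex.ofReal_neg] using h
  -- regularity
  have h0mem : (0:ℝ) ∈ Ioo (-Real.pi) Real.pi := by constructor <;> simp [hpi] <;> linarith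
  have hsub : Ioo (0:ℝ) Real.pi ⊆ Ioo (-Real.pi) Real.pi := fun t ht =>
    ⟨by linarith [ht.1], ht.2⟩
  have hu1 : ContDiffOn ℝ (⊤:ℕ∞) (deriv u) (Ioo (-Real.pi) Real.pi) :=
    hu.deriv_of_isOpen isOpen_Ioo (by simp)
  have hu2 : ContDiffOn ℝ (⊤:ℕ∞) (deriv (deriv u)) (Ioo (-Real.pi) Real.pi) :=
    hu1.deriv_of_isOpen isOpen_Ioo (by simp)
  have hv1 : ContDiffOn ℝ (⊤:ℕ∞) (deriv v) (Ioo (-Real.pi) Real.pi) :=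
    hv.deriv_of_isOpen isOpen_Ioo (by simp)
  have hv2 : ContDiffOn ℝ (⊤:ℕ∞) (deriv (deriv v)) (Ioo (-Real.pi) Real.pi) :=
    hv1.deriv_of_isOpen isOpen_Ioo (by simp)
  have hda : ∀ (f : ℝ → ℂ), ContDiffOn ℝ (⊤:ℕ∞) f (Ioo (-Real.pi) Real.pi) →
      ∀ t ∈ Ioo (-Real.pi) Real.pi, HasDerivAt f (deriv f t) t := by
    intro f hf t ht
    exact ((hf.differentiableOn (by simp) t ht).differentiableAt
      (isOpen_Ioo.mem_nhds ht)).hasDerivAt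
  have HDu := hda u hu
  have HDu' := hda (deriv u) hu1
  have HDv := hda v hv
  have HDv' := hda (deriv v) hv1
  -- parity
  have hoddd : ∀ (f : ℝ → ℂ), (∀ x, f (-x) = f x) → ∀ t, deriv f (-t) = -deriv f t := by
    intro f hf t
    have h1 : (fun x => f (-x)) = f := funext hf
    have h2 := deriv_comp_neg (f := f) (x := t)
    rw [h1] at h2
    rw [h2, neg_neg]
  have hu'0 : deriv u 0 = 0 := by
    have h := hoddd u hueven 0
    rw [neg_zero] at h
    linear_combination h / 2
  have hv'0 : deriv v 0 = 0 := by
    have h := hoddd v hveven 0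
    rw [neg_zero] at h
    linear_combination h / 2
  -- ODE rearranged
  have hu2eq : ∀ t ∈ Ioo (0:ℝ) Real.pi,
      deriv (deriv u) t = c0 * u t - 2 * (k:ℂ) * (Co t / S t) * deriv u t := by
    intro t ht
    have h := huode t (by rw [abs_of_pos ht.1]; exact ht.1) (by rw [abs_of_pos ht.1]; exact ht.2)
    rw [hc0]; rw [hSdef, hCdef]; simp only []
    linear_combination h
  have hv2eq : ∀ t ∈ Ioo (0:ℝ) Real.pi,
      deriv (deriv v) t = c1 * v t - 2 * ((k:ℂ)+1) * (Co t / S t) * deriv v t := by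
    intro t ht
    have h := hvode t (by rw [abs_of_pos ht.1]; exact ht.1) (by rw [abs_of_pos ht.1]; exact ht.2)
    rw [hc1]; rw [hSdef, hCdef]; simp only []
    linear_combination h
  -- derivative of w
  have hw' : ∀ t ∈ Ioo (0:ℝ) Real.pi, HasDerivAt w (P t) t := by
    intro t ht
    have h := (HDu' t (hsub ht)).div (hS t) (hSne t ht)
    convert h using 1
    · rfl
    · rfl
    rw [hu2eq t ht, hPdef]
    have hs := hSne t ht
    field_simp
    ring
  -- derivative of P
  have hP' : ∀ t ∈ Ioo (0:ℝ) Real.pi,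
      HasDerivAt P (c1 * w t - 2 * ((k:ℂ)+1) * (Co t / S t) * P t) t := by
    intro t ht
    have hs := hSne t ht
    have h1 : HasDerivAt (fun y => c0 * u y) (c0 * deriv u t) t :=
      (HDu t (hsub ht)).const_mul c0
    have h2 := h1.div (hS t) hs
    have h3 : HasDerivAt (fun y => (2*(k:ℂ)+1) * (Co y * deriv u y))
        ((2*(k:ℂ)+1) * (-S t * deriv u t + Co t * deriv (deriv u) t)) t :=
      ((hCo t).mul (HDu' t (hsub ht))).const_mul _
    have h4 : HasDerivAt (fun y => S y ^ 2) (2 * S t * Co t) t := by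
      have h := hasDerivAt_pow_comp (hS t) 1
      norm_num at h
      convert h using 1 <;> ring
    have h5 := h3.div h4 (pow_ne_zero 2 hs)
    have h7 := h2.sub h5
    convert h7 using 1
    · rfl
    · rfl
    rw [hu2eq t ht, hwdef, hPdef, hc1, hc0]
    simp only []
    rw [sub_eq_sub_iff_sub_eq_sub]
    field_simp
    ring
  -- continuity at 0
  have cA : ∀ (f : ℝ → ℂ), ContDiffOn ℝ (⊤:ℕ∞) f (Ioo (-Real.pi) Real.pi) →
      ContinuousAt f 0 := fun f hf =>
    hf.continuousOn.continuousAt (isOpen_Ioo.mem_nhds h0mem)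
  have cAu := cA u hu
  have cAu1 := cA (deriv u) hu1
  have cAu2 := cA (deriv (deriv u)) hu2
  have cAv := cA v hv
  have cAv1 := cA (deriv v) hv1
  have hSC : Continuous S := Complex.continuous_ofReal.comp Real.continuous_sin
  have hCoC : Continuous Co := Complex.continuous_ofReal.comp Real.continuous_cos
  set A : ℂ := deriv (deriv u) 0 with hAdef
  have hIooPi_mem : Ioo (0:ℝ) Real.pi ∈ 𝓝[>] (0:ℝ) :=
    Ioo_mem_nhdsGT_of_mem ⟨le_refl 0, hpi⟩
  have hmono : 𝓝[>] (0:ℝ) ≤ 𝓝[≠] (0:ℝ) :=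
    nhdsWithin_mono 0 (fun x hx => ne_of_gt hx)
  -- limit of w at 0+
  have limw : Tendsto w (𝓝[>] (0:ℝ)) (𝓝 A) := by
    have h1 : Tendsto (fun t : ℝ => (t:ℂ)⁻¹ * deriv u t) (𝓝[≠] (0:ℝ)) (𝓝 A) := by
      have h := hasDerivAt_iff_tendsto_slope.1 (HDu' 0 h0mem)
      refine h.congr ?_
      intro t
      simp [slope, hu'0, Complex.real_smul, Complex.ofReal_inv]
    have hsin1 : Tendsto (fun t : ℝ => Real.sin t / t) (𝓝[≠] (0:ℝ)) (𝓝 1) := by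
      have h := hasDerivAt_iff_tendsto_slope.1 (Real.hasDerivAt_sin 0)
      rw [Real.cos_zero] at h
      refine h.congr ?_
      intro t
      simp [slope, div_eq_inv_mul]
    have hsin2 : Tendsto (fun t : ℝ => t / Real.sin t) (𝓝[≠] (0:ℝ)) (𝓝 1) := by
      have h := hsin1.inv₀ one_ne_zero
      rw [inv_one] at h
      refine h.congr ?_
      intro t
      rw [inv_div]
    have hsin3 : Tendsto (fun t : ℝ => ((t / Real.sin t : ℝ) : ℂ)) (𝓝[≠] (0:ℝ)) (𝓝 1) := by
      have h := (Complex.continuous_ofReal.tendsto 1).comp hsin2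
      simpa only [Function.comp_def, Complex.ofReal_one] using h
    have hprod := (h1.mul hsin3).mono_left hmono
    rw [mul_one] at hprod
    refine hprod.congr' ?_
    filter_upwards [hIooPi_mem] with t ht
    have hs' : (Real.sin t : ℂ) ≠ 0 := hSne t ht
    have htne : (t:ℂ) ≠ 0 := Complex.ofReal_ne_zero.2 (ne_of_gt ht.1)
    show (t:ℂ)⁻¹ * deriv u t * ((t / Real.sin t : ℝ) : ℂ) = deriv u t / (Real.sin t : ℂ)
    rw [Complex.ofReal_div]
    field_simp
  -- identity (2k+1) A = c0
  have hA : (2*(k:ℂ)+1) * A = c0 := by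
    have TCo : Tendsto Co (𝓝[>] (0:ℝ)) (𝓝 1) := by
      have h : Tendsto Co (𝓝[>] (0:ℝ)) (𝓝 (Co 0)) :=
        (hCoC.tendsto 0).mono_left nhdsWithin_le_nhds
      simpa [hCdef] using h
    have lim1 : Tendsto (fun t => deriv (deriv u) t + 2*(k:ℂ) * Co t * w t)
        (𝓝[>] (0:ℝ)) (𝓝 (A + 2*(k:ℂ) * 1 * A)) := by
      exact (cAu2.tendsto.mono_left nhdsWithin_le_nhds).add
        ((tendsto_const_nhds.mul TCo).mul limw)
    have lim2 : Tendsto (fun t => deriv (deriv u) t + 2*(k:ℂ) * Co t * w t)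
        (𝓝[>] (0:ℝ)) (𝓝 (c0 * 1)) := by
      have hbase : Tendsto (fun t => c0 * u t) (𝓝[>] (0:ℝ)) (𝓝 (c0 * 1)) := by
        have h : Tendsto u (𝓝[>] (0:ℝ)) (𝓝 (u 0)) :=
          cAu.tendsto.mono_left nhdsWithin_le_nhds
        have h2 := h.const_mul c0
        rwa [hu0] at h2
      refine hbase.congr' ?_
      filter_upwards [hIooPi_mem] with t ht
      have h := huode t (by rw [abs_of_pos ht.1]; exact ht.1)
        (by rw [abs_of_pos ht.1]; exact ht.2)
      rw [hwdef]
      simp only [hSdef, hCdef] at h ⊢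
      linear_combination -h
    have h := tendsto_nhds_unique lim1 lim2
    linear_combination h
  set d : ℂ := c0 / (2*(k:ℂ)+1) with hddef
  have hAd : A = d := by
    rw [hddef, eq_div_iff hkne]
    linear_combination hA
  -- the Wronskian vanishes
  have Wzero : ∀ t ∈ Ioo (0:ℝ) Real.pi, P t * v t - w t * deriv v t = 0 := by
    set g : ℝ → ℂ := fun t => S t ^ (2*k+1+1) * (P t * v t - w t * deriv v t) with hgdef
    have hg' : ∀ t ∈ Ioo (0:ℝ) Real.pi, HasDerivAt g 0 t := by
      intro t ht
      have hs := hSne t ht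
      have hpow := hasDerivAt_pow_comp (hS t) (2*k+1)
      have hWd : HasDerivAt (fun y => P y * v y - w y * deriv v y)
          ((c1 * w t - 2*((k:ℂ)+1)*(Co t/S t)*P t) * v t + P t * deriv v t
            - (P t * deriv v t + w t * deriv (deriv v) t)) t :=
        ((hP' t ht).mul (HDv t (hsub ht))).sub ((hw' t ht).mul (HDv' t (hsub ht)))
      have h := hpow.mul hWd
      convert h using 1
      · rfl
      · rfl
      rw [hv2eq t ht]
      push_cast
      field_simp
      ring
    have glim : Tendsto g (𝓝[>] (0:ℝ)) (𝓝 0) := by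
      have hcE : ContinuousAt (fun t => (c0 * u t * S t ^ (2*k+1)
          - (2*(k:ℂ)+1) * Co t * deriv u t * S t ^ (2*k)) * v t
          - deriv u t * S t ^ (2*k+1) * deriv v t) 0 := by
        exact ((((cAu.const_mul c0).mul ((hSC.continuousAt).pow (2*k+1))).sub
          (((continuousAt_const.mul hCoC.continuousAt).mul cAu1).mul
            ((hSC.continuousAt).pow (2*k)))).mul cAv).sub
          ((cAu1.mul ((hSC.continuousAt).pow (2*k+1))).mul cAv1)
      have hE : Tendsto _ (𝓝[>] (0:ℝ)) _ := hcE.tendsto.mono_left nhdsWithin_le_nhds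
      have hval : ((c0 * u 0 * S 0 ^ (2*k+1)
          - (2*(k:ℂ)+1) * Co 0 * deriv u 0 * S 0 ^ (2*k)) * v 0
          - deriv u 0 * S 0 ^ (2*k+1) * deriv v 0) = 0 := by
        rw [hu'0]
        simp [hSdef]
      rw [hval] at hE
      refine hE.congr' ?_
      filter_upwards [hIooPi_mem] with t ht
      have hs := hSne t ht
      have hP2 : S t ^ 2 * P t = c0 * u t * S t - (2*(k:ℂ)+1) * (Co t * deriv u t) := by
        rw [hPdef]
        field_simp
      have hw2 : S t * w t = deriv u t := by
        rw [hwdef]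
        field_simp
      rw [hgdef]
      linear_combination (-(S t ^ (2*k) * v t)) * hP2 + (S t ^ (2*k+1) * deriv v t) * hw2
    intro t ht
    have hconst : ∀ x ∈ Ioc (0:ℝ) t, g t = g x := by
      intro x hx
      have hIccsub : Icc x t ⊆ Ioo (0:ℝ) Real.pi := fun y hy =>
        ⟨lt_of_lt_of_le hx.1 hy.1, lt_of_le_of_lt hy.2 ht.2⟩
      have hcont : ContinuousOn g (Icc x t) := fun y hy =>
        ((hg' y (hIccsub hy)).continuousAt).continuousWithinAt
      have happ := constant_of_has_deriv_right_zero hcont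
        (fun y hy => (hg' y (hIccsub (Ico_subset_Icc_self hy))).hasDerivWithinAt)
      exact happ t (right_mem_Icc.2 hx.2)
    have hgt : Tendsto g (𝓝[>] (0:ℝ)) (𝓝 (g t)) := by
      refine tendsto_const_nhds.congr' ?_
      filter_upwards [Ioc_mem_nhdsGT_of_mem (⟨le_refl 0, ht.1⟩ : (0:ℝ) ∈ Ico 0 t)] with x hx
      exact hconst x hx
    have h0 : g t = 0 := tendsto_nhds_unique hgt glim
    have hp : S t ^ (2*k+1+1) ≠ 0 := pow_ne_zero _ (hSne t ht)
    rw [hgdef] at h0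
    simp only [] at h0
    exact (mul_eq_zero.1 h0).resolve_left hp
  -- near 0 : v ≠ 0 and w = d v
  have hvne0 : ∀ᶠ x in 𝓝 (0:ℝ), v x ≠ 0 :=
    cAv.eventually_ne (by rw [hv0]; exact one_ne_zero)
  obtain ⟨δ, hδpos, hδsub⟩ :=
    mem_nhdsGT_iff_exists_Ioo_subset.1
      (inter_mem (nhdsWithin_le_nhds hvne0) hIooPi_mem)
  have hδprop : ∀ t ∈ Ioo (0:ℝ) δ, v t ≠ 0 ∧ t ∈ Ioo (0:ℝ) Real.pi := fun t htt => hδsub htt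
  have hq' : ∀ t ∈ Ioo (0:ℝ) δ, HasDerivAt (fun y => w y / v y) 0 t := by
    intro t htt
    obtain ⟨hvne, htp⟩ := hδprop t htt
    have h := (hw' t htp).div (HDv t (hsub htp)) hvne
    convert h using 1
    · rfl
    · rfl
    rw [Wzero t htp]
    simp
  have qlim : Tendsto (fun y => w y / v y) (𝓝[>] (0:ℝ)) (𝓝 A) := by
    have hv1' : Tendsto v (𝓝[>] (0:ℝ)) (𝓝 1) := by
      have h : Tendsto v (𝓝[>] (0:ℝ)) (𝓝 (v 0)) :=
        cAv.tendsto.mono_left nhdsWithin_le_nhds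
      rwa [hv0] at h
    have h := limw.div hv1' one_ne_zero
    simpa [Pi.div_def] using h
  have weqd : ∀ t ∈ Ioo (0:ℝ) δ, w t = d * v t := by
    intro t htt
    have hconst : ∀ x ∈ Ioc (0:ℝ) t, w t / v t = w x / v x := by
      intro x hx
      have hIccsub : Icc x t ⊆ Ioo (0:ℝ) δ := fun y hy =>
        ⟨lt_of_lt_of_le hx.1 hy.1, lt_of_le_of_lt hy.2 htt.2⟩
      have hcont : ContinuousOn (fun y => w y / v y) (Icc x t) := fun y hy =>
        ((hq' y (hIccsub hy)).continuousAt).continuousWithinAt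
      have happ := constant_of_has_deriv_right_zero hcont
        (fun y hy => (hq' y (hIccsub (Ico_subset_Icc_self hy))).hasDerivWithinAt)
      exact happ t (right_mem_Icc.2 hx.2)
    have hqt : Tendsto (fun y => w y / v y) (𝓝[>] (0:ℝ)) (𝓝 (w t / v t)) := by
      refine tendsto_const_nhds.congr' ?_
      filter_upwards [Ioc_mem_nhdsGT_of_mem (⟨le_refl 0, htt.1⟩ : (0:ℝ) ∈ Ico 0 t)] with x hx
      exact hconst x hx
    have h0 : w t / v t = A := tendsto_nhds_unique hqt qlim
    rw [div_eq_iff (hδprop t htt).1] at h0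
    rw [h0, hAd]
  have Peq : ∀ t ∈ Ioo (0:ℝ) δ, P t = d * deriv v t := by
    intro t htt
    obtain ⟨hvne, htp⟩ := hδprop t htt
    have hev : w =ᶠ[𝓝 t] (fun x => d * v x) := by
      filter_upwards [isOpen_Ioo.mem_nhds htt] with x hx
      exact weqd x hx
    have h1 := hw' t htp
    have h2 : HasDerivAt (fun x => d * v x) (d * deriv v t) t :=
      (HDv t (hsub htp)).const_mul d
    have h3 : HasDerivAt w (d * deriv v t) t := h2.congr_of_eventuallyEq hev
    exact h1.unique h3
  -- global propagation via Gronwall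
  have final : ∀ r ∈ Ioo (0:ℝ) Real.pi, w r = d * v r := by
    intro r hr
    set t0 : ℝ := min δ r / 2 with ht0def
    have hminpos : 0 < min δ r := lt_min hδpos hr.1
    have ht0pos : 0 < t0 := by rw [ht0def]; positivity
    have ht0δ : t0 < δ := by
      have h1 : min δ r ≤ δ := min_le_left _ _
      rw [ht0def]; linarith
    have ht0r : t0 < r := by
      have h1 : min δ r ≤ r := min_le_right _ _
      rw [ht0def]; linarith
    have hsubIcc : Icc t0 r ⊆ Ioo (0:ℝ) Real.pi := fun y hy =>
      ⟨lt_of_lt_of_le ht0pos hy.1, lt_of_le_of_lt hy.2 hr.2⟩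
    have hcoefC : ContinuousOn (fun t => 2*((k:ℂ)+1) * (Co t / S t)) (Icc t0 r) :=
      continuousOn_const.mul (ContinuousOn.div hCoC.continuousOn hSC.continuousOn
        (fun y hy => hSne y (hsubIcc hy)))
    obtain ⟨M, hM⟩ := isCompact_Icc.exists_bound_of_continuousOn hcoefC
    have hM0 : 0 ≤ M := le_trans (norm_nonneg _) (hM t0 (left_mem_Icc.2 (le_of_lt ht0r)))
    set K : ℝ := 1 + ‖c1‖ + M with hKdef
    set f : ℝ → ℂ × ℂ := fun t => (w t - d * v t, P t - d * deriv v t) with hfdef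
    set F : ℝ → ℂ × ℂ := fun t => (P t - d * deriv v t,
        c1 * (w t - d * v t) - (2*((k:ℂ)+1) * (Co t / S t)) * (P t - d * deriv v t)) with hFdef
    have hder : ∀ t ∈ Ioo (0:ℝ) Real.pi, HasDerivAt f (F t) t := by
      intro t ht
      have h1 : HasDerivAt (fun y => w y - d * v y) (P t - d * deriv v t) t :=
        (hw' t ht).sub ((HDv t (hsub ht)).const_mul d)
      have h2 : HasDerivAt (fun y => P y - d * deriv v y)
          (c1 * (w t - d * v t) - (2*((k:ℂ)+1) * (Co t / S t)) * (P t - d * deriv v t)) t := by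
        have h := (hP' t ht).sub ((HDv' t (hsub ht)).const_mul d)
        convert h using 1
        · rfl
        · rfl
        rw [hv2eq t ht]
        ring
      exact h1.prodMk h2
    have hcont : ContinuousOn f (Icc t0 r) := fun y hy =>
      ((hder y (hsubIcc hy)).continuousAt).continuousWithinAt
    have hbound : ∀ t ∈ Ico t0 r, ‖F t‖ ≤ K * ‖f t‖ + 0 := by
      intro t ht
      have htI : t ∈ Icc t0 r := Ico_subset_Icc_self ht
      rw [add_zero]
      have hnf : ‖f t‖ = max ‖w t - d * v t‖ ‖P t - d * deriv v t‖ := by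
        rw [hfdef]; exact Prod.norm_def _
      have hnF : ‖F t‖ = max ‖P t - d * deriv v t‖
          ‖c1 * (w t - d * v t) - (2*((k:ℂ)+1) * (Co t / S t)) * (P t - d * deriv v t)‖ := by
        rw [hFdef]; exact Prod.norm_def _
      set a := ‖w t - d * v t‖
      set b := ‖P t - d * deriv v t‖
      have ha0 : 0 ≤ a := norm_nonneg _
      have hb0 : 0 ≤ b := norm_nonneg _
      have hcoef := hM t htI
      have h2 : ‖c1 * (w t - d * v t) - (2*((k:ℂ)+1) * (Co t / S t)) * (P t - d * deriv v t)‖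
          ≤ ‖c1‖ * a + M * b := by
        refine le_trans (norm_sub_le _ _) ?_
        rw [norm_mul, norm_mul]
        have := mul_le_mul_of_nonneg_right hcoef hb0
        linarith
      rw [hnf, hnF]
      apply max_le
      · calc b ≤ max a b := le_max_right _ _
          _ ≤ K * max a b := le_mul_of_one_le_left (le_trans ha0 (le_max_left _ _))
              (by rw [hKdef]; linarith [norm_nonneg c1])
      · calc ‖c1 * (w t - d * v t) - (2*((k:ℂ)+1) * (Co t / S t)) * (P t - d * deriv v t)‖
            ≤ ‖c1‖ * a + M * b := h2
          _ ≤ ‖c1‖ * max a b + M * max a b := by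
              have h3 := mul_le_mul_of_nonneg_left (le_max_left a b) (norm_nonneg c1)
              have h4 := mul_le_mul_of_nonneg_left (le_max_right a b) hM0
              linarith
          _ ≤ K * max a b := by
              rw [hKdef]
              have h5 : 0 ≤ max a b := le_trans ha0 (le_max_left _ _)
              nlinarith
    have hzero : ‖f t0‖ ≤ 0 := by
      have h1 : f t0 = 0 := by
        rw [hfdef]
        simp only []
        rw [weqd t0 ⟨ht0pos, ht0δ⟩, Peq t0 ⟨ht0pos, ht0δ⟩]
        simp [Prod.ext_iff]
      rw [h1, norm_zero]
    have hgr := norm_le_gronwallBound_of_norm_deriv_right_le hcont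
      (fun t ht => (hder t (hsubIcc (Ico_subset_Icc_self ht))).hasDerivWithinAt)
      hzero hbound r (right_mem_Icc.2 (le_of_lt ht0r))
    rw [gronwallBound_ε0_δ0] at hgr
    have hfr : f r = 0 := by rwa [norm_le_zero_iff] at hgr
    have h1 : w r - d * v r = 0 := by
      have := congrArg Prod.fst hfr
      simpa [hfdef] using this
    linear_combination h1
  intro r hr
  exact final r hr

/-- The recursion `(1/sin r)(d/dr) φ_{λ,k}(ir) = ((λ²+k²)/(2k+1)) φ_{λ,k+1}(ir)`
between the analytically continued spherical functions of `H^{2k+1}` and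
`H^{2k+3}`. -/
theorem stmt_13 (k : ℕ) (lam : ℝ) (u v : ℝ → ℂ)
    (hu : ContDiffOn ℝ (⊤ : ℕ∞) u (Set.Ioo (-Real.pi) Real.pi))
    (hueven : ∀ r : ℝ, u (-r) = u r) (hu0 : u 0 = 1)
    (huode : ∀ r : ℝ, 0 < |r| → |r| < Real.pi →
      deriv (deriv u) r + 2 * (k : ℂ) * ((Real.cos r : ℂ) / (Real.sin r : ℂ)) * deriv u r
        = (((lam : ℂ)) ^ 2 + (k : ℂ) ^ 2) * u r)
    (hv : ContDiffOn ℝ (⊤ : ℕ∞) v (Set.Ioo (-Real.pi) Real.pi))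
    (hveven : ∀ r : ℝ, v (-r) = v r) (hv0 : v 0 = 1)
    (hvode : ∀ r : ℝ, 0 < |r| → |r| < Real.pi →
      deriv (deriv v) r
          + 2 * ((k : ℂ) + 1) * ((Real.cos r : ℂ) / (Real.sin r : ℂ)) * deriv v r
        = (((lam : ℂ)) ^ 2 + ((k : ℂ) + 1) ^ 2) * v r) :
    ∀ r : ℝ, 0 < |r| → |r| < Real.pi →
      deriv u r / (Real.sin r : ℂ)
        = ((((lam : ℂ)) ^ 2 + (k : ℂ) ^ 2) / (2 * (k : ℂ) + 1)) * v r := by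
  intro r hr0 hrpi
  have key := stmt_13_aux k lam u v hu hueven hu0 huode hv hveven hv0 hvode
  rcases lt_or_gt_of_ne (fun h => by simp [h] at hr0 : r ≠ 0) with hneg | hpos
  · -- r < 0
    rw [abs_of_neg hneg] at hrpi
    have h1 : deriv u r = - deriv u (-r) := by
      have h2 : (fun x => u (-x)) = u := funext hueven
      have h3 := deriv_comp_neg (f := u) (x := r)
      rw [h2] at h3
      exact h3
    have h4 : (Real.sin r : ℂ) = - (Real.sin (-r) : ℂ) := by
      rw [Real.sin_neg]; push_cast; ring
    rw [h1, h4, neg_div_neg_eq, key (-r) ⟨by linarith, hrpi⟩, hveven]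
  · rw [abs_of_pos hpos] at hrpi
    exact key r ⟨hpos, hrpi⟩
end

section
/- Let k ≥ 0 be an integer and μ ∈ ℂ. If u, v : ℝ → ℂ are smooth on (−π, π), even, satisfy u(0) = v(0), and both satisfy the equation w″(r) + 2k·(cos r/sin r)·w′(r) = μ·w(r) for all 0 < r < π, then u(r) = v(r) for all r ∈ (−π, π). -/
open Real Set intervalIntegral

/-- Ratio bound for sin on `[0, b] ⊆ [0, π)`. -/
lemma sin_ratio_aux {s r b : ℝ} (hs : 0 ≤ s) (hsr : s ≤ r) (hrb : r ≤ b) (hb : b < π) :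
    Real.sin s * Real.sin b ≤ Real.sin r := by
  rcases le_or_gt r (π / 2) with hr | hr
  · have h1 : Real.sin s ≤ Real.sin r :=
      Real.sin_le_sin_of_le_of_le_pi_div_two (by linarith [Real.pi_pos]) hr hsr
    have h2 : Real.sin b ≤ 1 := Real.sin_le_one b
    have h3 : 0 ≤ Real.sin s := Real.sin_nonneg_of_nonneg_of_le_pi hs (by linarith)
    nlinarith
  · have h1 : Real.sin b ≤ Real.sin r := by
      rw [← Real.sin_pi_sub b, ← Real.sin_pi_sub r]
      exact Real.sin_le_sin_of_le_of_le_pi_div_two (by linarith) (by linarith) (by linarith)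
    have h2 : Real.sin s ≤ 1 := Real.sin_le_one s
    have h3 : 0 ≤ Real.sin b := Real.sin_nonneg_of_nonneg_of_le_pi (by linarith [Real.pi_pos]) hb.le
    nlinarith [Real.sin_nonneg_of_nonneg_of_le_pi hs (by linarith : s ≤ π)]

/-- Key uniqueness lemma: a smooth solution with `w 0 = 0`, `w' 0 = 0` vanishes on `[0, π)`. -/
lemma key_vanish (k : ℕ) (μ : ℂ) (w : ℝ → ℂ)
    (hw : ContDiffOn ℝ (⊤ : ℕ∞) w (Set.Ioo (-Real.pi) Real.pi))
    (h0 : w 0 = 0) (h0' : deriv w 0 = 0)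
    (hode : ∀ r : ℝ, 0 < r → r < Real.pi →
      deriv (deriv w) r + 2 * (k : ℂ) * ((Real.cos r : ℂ) / (Real.sin r : ℂ)) * deriv w r
        = μ * w r) :
    ∀ r : ℝ, 0 ≤ r → r < Real.pi → w r = 0 := by
  have hπ := Real.pi_pos
  set S : Set ℝ := Set.Ioo (-Real.pi) Real.pi with hSdef
  have hSopen : IsOpen S := isOpen_Ioo
  have hle1 : (1 : WithTop ℕ∞) ≤ ((⊤ : ℕ∞) : WithTop ℕ∞) := by exact_mod_cast le_top
  have hle2 : ((⊤ : ℕ∞) : WithTop ℕ∞) + 1 ≤ ((⊤ : ℕ∞) : WithTop ℕ∞) := by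
    exact_mod_cast le_top
  have hmem : ∀ {x : ℝ}, x ∈ S → S ∈ nhds x := fun hx => hSopen.mem_nhds hx
  have hwd : DifferentiableOn ℝ w S := hw.differentiableOn (by simp)
  have hw' : ContDiffOn ℝ (⊤ : ℕ∞) (deriv w) S := hw.deriv_of_isOpen hSopen hle2
  have hw'd : DifferentiableOn ℝ (deriv w) S := hw'.differentiableOn (by simp)
  have hcw : ContinuousOn w S := hw.continuousOn
  have hcw' : ContinuousOn (deriv w) S := hw'.continuousOn
  have hD1 : ∀ x ∈ S, HasDerivAt w (deriv w x) x := fun x hx =>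
    (hwd.differentiableAt (hmem hx)).hasDerivAt
  have hD2 : ∀ x ∈ S, HasDerivAt (deriv w) (deriv (deriv w) x) x := fun x hx =>
    (hw'd.differentiableAt (hmem hx)).hasDerivAt
  suffices H : ∀ b : ℝ, 0 < b → b < Real.pi → ∀ r ∈ Set.Icc (0:ℝ) b, w r = 0 by
    intro r hr hrpi
    rcases eq_or_lt_of_le hr with h | h
    · rw [← h]; exact h0
    · exact H ((r + Real.pi)/2) (by linarith) (by linarith) r ⟨hr, by linarith⟩
  intro b hb hbπ
  have hIccS : Set.Icc (0:ℝ) b ⊆ S := fun x hx => ⟨by linarith [hx.1], by linarith [hx.2]⟩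
  have hsb : 0 < Real.sin b := Real.sin_pos_of_pos_of_lt_pi hb hbπ
  set C : ℝ := ‖μ‖ / (Real.sin b)^(2*k) with hC
  have hC0 : 0 ≤ C := div_nonneg (norm_nonneg _) (pow_nonneg hsb.le _)
  have hcsin : Continuous fun s : ℝ => ((Real.sin s : ℂ))^(2*k) :=
    (Complex.continuous_ofReal.comp Real.continuous_sin).pow _
  set g : ℝ → ℂ := fun s => ((Real.sin s : ℂ))^(2*k) * deriv w s with hgdef
  -- derivative of g on (0, π)
  have hgderiv : ∀ x, 0 < x → x < Real.pi →
      HasDerivAt g (μ * ((Real.sin x : ℂ))^(2*k) * w x) x := by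
    intro x hx1 hx2
    have hxS : x ∈ S := ⟨by linarith, hx2⟩
    have hsinx : Real.sin x ≠ 0 := (Real.sin_pos_of_pos_of_lt_pi hx1 hx2).ne'
    have hsinC : (Real.sin x : ℂ) ≠ 0 := by exact_mod_cast hsinx
    have h2 : HasDerivAt (fun s : ℝ => ((Real.sin s : ℂ))^(2*k))
        ((2*k : ℕ) * ((Real.sin x : ℂ))^(2*k-1) * (Real.cos x : ℂ)) x := by
      have := ((Complex.hasDerivAt_sin (x:ℂ)).pow (n := 2*k)).comp_ofReal
      simpa only [Pi.pow_apply, ← Complex.ofReal_sin, ← Complex.ofReal_cos] using this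
    have h3 := h2.mul (hD2 x hxS)
    convert h3 using 1
    · rfl
    case e'_8 => rfl
    have hd : (Real.cos x : ℂ)/(Real.sin x : ℂ) * (Real.sin x : ℂ) = (Real.cos x : ℂ) :=
      div_mul_cancel₀ _ hsinC
    have hifier2 : (Real.sin x : ℂ) * deriv (deriv w) x
        + 2*(k:ℂ)*(Real.cos x : ℂ)*deriv w x = μ * (Real.sin x : ℂ) * w x := by
      linear_combination (Real.sin x : ℂ) * (hode x hx1 hx2)
        - 2*(k:ℂ) * deriv w x * hd
    rcases Nat.eq_zero_or_pos k with hk | hk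
    · subst hk
      have h := hode x hx1 hx2
      norm_num at h ⊢
      linear_combination -h
    · have hpow : ((Real.sin x : ℂ))^(2*k-1) * (Real.sin x : ℂ) = ((Real.sin x : ℂ))^(2*k) := by
        rw [← pow_succ]; congr 1; omega
      have hcast : ((2*k : ℕ) : ℂ) = 2*(k:ℂ) := by push_cast; ring
      rw [hcast]
      linear_combination (deriv (deriv w) x - μ * w x) * hpow
        - ((Real.sin x : ℂ))^(2*k-1) * hifier2
  have hg0 : g 0 = 0 := by
    simp [hgdef, h0']
  -- FTC for g
  have hgcont : ContinuousOn g (Set.Icc 0 b) := by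
    exact hcsin.continuousOn.mul (hcw'.mono hIccS)
  have hFTC : ∀ r ∈ Set.Icc (0:ℝ) b,
      g r = ∫ s in (0:ℝ)..r, μ * ((Real.sin s : ℂ))^(2*k) * w s := by
    intro r hr
    have hIccr : Set.Icc (0:ℝ) r ⊆ Set.Icc (0:ℝ) b := Set.Icc_subset_Icc le_rfl hr.2
    have hint : IntervalIntegrable (fun s => μ * ((Real.sin s : ℂ))^(2*k) * w s)
        MeasureTheory.volume 0 r := by
      apply ContinuousOn.intervalIntegrable
      rw [Set.uIcc_of_le hr.1]
      exact (continuousOn_const.mul hcsin.continuousOn).mul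
        (hcw.mono (hIccr.trans hIccS))
    have := intervalIntegral.integral_eq_sub_of_hasDeriv_right_of_le hr.1
      (hgcont.mono hIccr)
      (fun x hx => ((hgderiv x hx.1 (by linarith [hx.2, hr.2])).hasDerivWithinAt))
      hint
    rw [this, hg0, sub_zero]
  -- bound on ‖deriv w r‖
  have hnorm_g : ∀ r ∈ Set.Icc (0:ℝ) b, ‖g r‖ = (Real.sin r)^(2*k) * ‖deriv w r‖ := by
    intro r hr
    have hsr : 0 ≤ Real.sin r :=
      Real.sin_nonneg_of_nonneg_of_le_pi hr.1 (by linarith [hr.2])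
    show ‖((Real.sin r : ℂ))^(2*k) * deriv w r‖ = _
    rw [norm_mul, norm_pow, Complex.norm_real, Real.norm_eq_abs, abs_of_nonneg hsr]
  have hBound : ∀ r ∈ Set.Icc (0:ℝ) b,
      ‖deriv w r‖ ≤ C * ∫ s in (0:ℝ)..r, ‖w s‖ := by
    intro r hr
    rcases eq_or_lt_of_le hr.1 with h | h
    · rw [← h]
      simp [h0', intervalIntegral.integral_same]
    · have hsr : 0 < Real.sin r := Real.sin_pos_of_pos_of_lt_pi h (by linarith [hr.2])
      have hwcont : ContinuousOn (fun s => ‖w s‖) (Set.Icc 0 r) :=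
        (hcw.mono ((Set.Icc_subset_Icc le_rfl hr.2).trans hIccS)).norm
      have hint1 : IntervalIntegrable (fun s => ‖μ * ((Real.sin s : ℂ))^(2*k) * w s‖)
          MeasureTheory.volume 0 r := by
        apply ContinuousOn.intervalIntegrable
        rw [Set.uIcc_of_le hr.1]
        exact ((continuousOn_const.mul hcsin.continuousOn).mul
          (hcw.mono ((Set.Icc_subset_Icc le_rfl hr.2).trans hIccS))).norm
      have hint2 : IntervalIntegrable
          (fun s => ‖μ‖ * ((Real.sin r)^(2*k) / (Real.sin b)^(2*k)) * ‖w s‖)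
          MeasureTheory.volume 0 r := by
        apply ContinuousOn.intervalIntegrable
        rw [Set.uIcc_of_le hr.1]
        exact continuousOn_const.mul hwcont
      have step1 : ‖g r‖ ≤ ∫ s in (0:ℝ)..r, ‖μ * ((Real.sin s : ℂ))^(2*k) * w s‖ := by
        rw [hFTC r hr]
        exact intervalIntegral.norm_integral_le_integral_norm hr.1
      have step2 : (∫ s in (0:ℝ)..r, ‖μ * ((Real.sin s : ℂ))^(2*k) * w s‖)
          ≤ ∫ s in (0:ℝ)..r, ‖μ‖ * ((Real.sin r)^(2*k) / (Real.sin b)^(2*k)) * ‖w s‖ := by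
        apply intervalIntegral.integral_mono_on hr.1 hint1 hint2
        intro s hs
        have hss : 0 ≤ Real.sin s :=
          Real.sin_nonneg_of_nonneg_of_le_pi hs.1 (by linarith [hs.2, hr.2])
        have hratio : (Real.sin s)^(2*k) ≤ (Real.sin r)^(2*k) / (Real.sin b)^(2*k) := by
          rw [le_div_iff₀ (by positivity)]
          calc (Real.sin s)^(2*k) * (Real.sin b)^(2*k) = (Real.sin s * Real.sin b)^(2*k) := by
                rw [mul_pow]
            _ ≤ (Real.sin r)^(2*k) := by
                apply pow_le_pow_left₀ (by positivity)
                exact sin_ratio_aux hs.1 hs.2 hr.2 hbπ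
        have : ‖μ * ((Real.sin s : ℂ))^(2*k) * w s‖
            = ‖μ‖ * (Real.sin s)^(2*k) * ‖w s‖ := by
          rw [norm_mul, norm_mul, norm_pow, Complex.norm_real, Real.norm_eq_abs,
            abs_of_nonneg hss]
        rw [this]
        have := mul_le_mul_of_nonneg_right hratio (norm_nonneg (w s))
        nlinarith [norm_nonneg μ, norm_nonneg (w s)]
      have step3 : (∫ s in (0:ℝ)..r, ‖μ‖ * ((Real.sin r)^(2*k) / (Real.sin b)^(2*k)) * ‖w s‖)
          = ‖μ‖ * ((Real.sin r)^(2*k) / (Real.sin b)^(2*k)) * ∫ s in (0:ℝ)..r, ‖w s‖ := by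
        rw [intervalIntegral.integral_const_mul]
      have hfinal : (Real.sin r)^(2*k) * ‖deriv w r‖
          ≤ ‖μ‖ * ((Real.sin r)^(2*k) / (Real.sin b)^(2*k)) * ∫ s in (0:ℝ)..r, ‖w s‖ := by
        rw [← hnorm_g r hr]
        calc ‖g r‖ ≤ _ := step1
          _ ≤ _ := step2
          _ = _ := step3
      have hpowpos : (0:ℝ) < (Real.sin r)^(2*k) := by positivity
      rw [hC]
      have h2 : ‖μ‖ * ((Real.sin r)^(2*k) / (Real.sin b)^(2*k)) * (∫ s in (0:ℝ)..r, ‖w s‖)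
          = (Real.sin r)^(2*k) * (‖μ‖ / (Real.sin b)^(2*k) * ∫ s in (0:ℝ)..r, ‖w s‖) := by
        ring
      rw [h2] at hfinal
      exact le_of_mul_le_mul_left hfinal hpowpos
  -- FTC bound for w itself
  have hwle : ∀ r ∈ Set.Icc (0:ℝ) b, ‖w r‖ ≤ ∫ s in (0:ℝ)..r, ‖deriv w s‖ := by
    intro r hr
    have hIccr : Set.Icc (0:ℝ) r ⊆ S := (Set.Icc_subset_Icc le_rfl hr.2).trans hIccS
    have hint : IntervalIntegrable (deriv w) MeasureTheory.volume 0 r := by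
      apply ContinuousOn.intervalIntegrable
      rw [Set.uIcc_of_le hr.1]
      exact hcw'.mono hIccr
    have hFTCw : ∫ s in (0:ℝ)..r, deriv w s = w r - w 0 :=
      intervalIntegral.integral_eq_sub_of_hasDeriv_right_of_le hr.1 (hcw.mono hIccr)
        (fun x hx => (hD1 x (hIccr ⟨hx.1.le, hx.2.le⟩)).hasDerivWithinAt) hint
    rw [h0, sub_zero] at hFTCw
    rw [← hFTCw]
    exact intervalIntegral.norm_integral_le_integral_norm hr.1
  -- Gronwall setup
  set q : ℝ → ℝ := fun s => ‖w s‖ + ‖deriv w s‖ with hqdef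
  have hqcont : ContinuousOn q S := hcw.norm.add hcw'.norm
  have hq0 : ∀ s ∈ S, 0 ≤ q s := fun s _ => add_nonneg (norm_nonneg _) (norm_nonneg _)
  set F : ℝ → ℝ := fun t => ∫ s in (0:ℝ)..t, q s with hFdef
  have hqint : ∀ r ∈ Set.Icc (0:ℝ) b, IntervalIntegrable q MeasureTheory.volume 0 r := by
    intro r hr
    apply ContinuousOn.intervalIntegrable
    rw [Set.uIcc_of_le hr.1]
    exact hqcont.mono ((Set.Icc_subset_Icc le_rfl hr.2).trans hIccS)
  have hqintb : ∀ {x y : ℝ}, x ∈ Set.Icc (0:ℝ) b → y ∈ Set.Icc (0:ℝ) b →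
      IntervalIntegrable q MeasureTheory.volume x y := by
    intro x y hx hy
    exact (hqint x hx).symm.trans (hqint y hy)
  have hFderiv : ∀ t ∈ Set.Icc (0:ℝ) b, HasDerivAt F (q t) t := by
    intro t ht
    exact intervalIntegral.integral_hasDerivAt_right (hqint t ht)
      (ContinuousOn.stronglyMeasurableAtFilter hSopen hqcont t (hIccS ht))
      ((hqcont.continuousAt (hmem (hIccS ht))))
  have hFnonneg : ∀ t ∈ Set.Icc (0:ℝ) b, 0 ≤ F t := by
    intro t ht
    apply intervalIntegral.integral_nonneg ht.1
    intro s hs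
    exact hq0 s (hIccS ⟨hs.1, le_trans hs.2 ht.2⟩)
  have hintle : ∀ t ∈ Set.Icc (0:ℝ) b,
      (∫ s in (0:ℝ)..t, ‖w s‖) ≤ F t ∧ (∫ s in (0:ℝ)..t, ‖deriv w s‖) ≤ F t := by
    intro t ht
    have hsub : Set.Icc (0:ℝ) t ⊆ S := (Set.Icc_subset_Icc le_rfl ht.2).trans hIccS
    have h1 : IntervalIntegrable (fun s => ‖w s‖) MeasureTheory.volume 0 t := by
      apply ContinuousOn.intervalIntegrable
      rw [Set.uIcc_of_le ht.1]; exact (hcw.mono hsub).norm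
    have h2 : IntervalIntegrable (fun s => ‖deriv w s‖) MeasureTheory.volume 0 t := by
      apply ContinuousOn.intervalIntegrable
      rw [Set.uIcc_of_le ht.1]; exact (hcw'.mono hsub).norm
    constructor
    · apply intervalIntegral.integral_mono_on ht.1 h1 (hqint t ht)
      intro s _; exact le_add_of_nonneg_right (norm_nonneg _)
    · apply intervalIntegral.integral_mono_on ht.1 h2 (hqint t ht)
      intro s _; exact le_add_of_nonneg_left (norm_nonneg _)
  -- apply Gronwall
  have hgron : ∀ t ∈ Set.Icc (0:ℝ) b, ‖F t‖ ≤ gronwallBound 0 (1 + C) 0 (t - 0) := by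
    apply norm_le_gronwallBound_of_norm_deriv_right_le
    · exact fun t ht => ((hFderiv t ht).continuousAt.continuousWithinAt)
    · exact fun t ht => (hFderiv t (Set.mem_Icc_of_Ico ht)).hasDerivWithinAt
    · simp [hFdef]
    · intro t ht
      have ht' : t ∈ Set.Icc (0:ℝ) b := Set.mem_Icc_of_Ico ht
      have hFt : ‖F t‖ = F t := abs_of_nonneg (hFnonneg t ht')
      have hqt : ‖q t‖ = q t := abs_of_nonneg (hq0 t (hIccS ht'))
      rw [hFt, hqt]
      have h1 : ‖w t‖ ≤ F t := le_trans (hwle t ht') (hintle t ht').2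
      have h2 : ‖deriv w t‖ ≤ C * F t := by
        calc ‖deriv w t‖ ≤ C * ∫ s in (0:ℝ)..t, ‖w s‖ := hBound t ht'
          _ ≤ C * F t := mul_le_mul_of_nonneg_left (hintle t ht').1 hC0
      simp only [hqdef]
      linarith
  intro r hr
  have hF0 : F r = 0 := by
    have := hgron r hr
    rw [gronwallBound_ε0_δ0] at this
    have habs : ‖F r‖ = F r := abs_of_nonneg (hFnonneg r hr)
    rw [habs] at this
    linarith [hFnonneg r hr]
  have : ‖w r‖ ≤ F r := le_trans (hwle r hr) (hintle r hr).2
  rw [hF0] at this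
  exact norm_le_zero_iff.mp this

/-- Uniqueness of smooth even eigenfunctions of the radial spherical Laplacian
`d²/dr² + 2k (cos r/sin r) d/dr` on `(-π, π)` with a prescribed value at the
origin. -/
theorem stmt_14 (k : ℕ) (μ : ℂ) (u v : ℝ → ℂ)
    (hu : ContDiffOn ℝ (⊤ : ℕ∞) u (Set.Ioo (-Real.pi) Real.pi))
    (hv : ContDiffOn ℝ (⊤ : ℕ∞) v (Set.Ioo (-Real.pi) Real.pi))
    (hueven : ∀ r : ℝ, u (-r) = u r) (hveven : ∀ r : ℝ, v (-r) = v r)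
    (h0 : u 0 = v 0)
    (huode : ∀ r : ℝ, 0 < r → r < Real.pi →
      deriv (deriv u) r + 2 * (k : ℂ) * ((Real.cos r : ℂ) / (Real.sin r : ℂ)) * deriv u r
        = μ * u r)
    (hvode : ∀ r : ℝ, 0 < r → r < Real.pi →
      deriv (deriv v) r + 2 * (k : ℂ) * ((Real.cos r : ℂ) / (Real.sin r : ℂ)) * deriv v r
        = μ * v r) :
    ∀ r ∈ Set.Ioo (-Real.pi) Real.pi, u r = v r := by
  set S : Set ℝ := Set.Ioo (-Real.pi) Real.pi with hS
  have hSopen : IsOpen S := isOpen_Ioo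
  set w : ℝ → ℂ := u - v with hwdef
  have hw : ContDiffOn ℝ (⊤ : ℕ∞) w S := hu.sub hv
  have hweven : ∀ r : ℝ, w (-r) = w r := by
    intro r; simp [hwdef, hueven r, hveven r]
  have hw0 : w 0 = 0 := by simp [hwdef, h0]
  -- derivative of an even function is odd
  have hwodd : ∀ r : ℝ, deriv w (-r) = -deriv w r := by
    intro r
    have : deriv (fun x => w (-x)) r = -deriv w (-r) := deriv_comp_neg w r
    rw [show (fun x => w (-x)) = w from funext hweven] at this
    rw [this, neg_neg]
  have hw0' : deriv w 0 = 0 := by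
    have h := hwodd 0
    rw [neg_zero] at h
    rw [eq_neg_iff_add_eq_zero, ← two_mul, mul_eq_zero] at h
    simpa using h
  -- deriv of difference on S
  have hmem : ∀ {x : ℝ}, x ∈ S → S ∈ nhds x := fun hx => hSopen.mem_nhds hx
  have hle1 : (1 : WithTop ℕ∞) ≤ ((⊤ : ℕ∞) : WithTop ℕ∞) := by exact_mod_cast le_top
  have hle2 : ((⊤ : ℕ∞) : WithTop ℕ∞) + 1 ≤ ((⊤ : ℕ∞) : WithTop ℕ∞) := by
    exact_mod_cast le_top
  have hud : ∀ x ∈ S, DifferentiableAt ℝ u x := fun x hx =>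
    (hu.differentiableOn (by simp)).differentiableAt (hmem hx)
  have hvd : ∀ x ∈ S, DifferentiableAt ℝ v x := fun x hx =>
    (hv.differentiableOn (by simp)).differentiableAt (hmem hx)
  have hderiv_eq : ∀ x ∈ S, deriv w x = deriv u x - deriv v x := by
    intro x hx
    exact deriv_sub (hud x hx) (hvd x hx)
  have hu' : ContDiffOn ℝ (⊤ : ℕ∞) (deriv u) S := hu.deriv_of_isOpen hSopen hle2
  have hv' : ContDiffOn ℝ (⊤ : ℕ∞) (deriv v) S := hv.deriv_of_isOpen hSopen hle2
  have hderiv2_eq : ∀ x ∈ S, deriv (deriv w) x = deriv (deriv u) x - deriv (deriv v) x := by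
    intro x hx
    have hev : deriv w =ᶠ[nhds x] (fun y => deriv u y - deriv v y) := by
      filter_upwards [hmem hx] with y hy using hderiv_eq y hy
    rw [hev.deriv_eq]
    exact deriv_fun_sub ((hu'.differentiableOn (by simp)).differentiableAt (hmem hx))
      ((hv'.differentiableOn (by simp)).differentiableAt (hmem hx))
  have hwode : ∀ r : ℝ, 0 < r → r < Real.pi →
      deriv (deriv w) r + 2 * (k : ℂ) * ((Real.cos r : ℂ) / (Real.sin r : ℂ)) * deriv w r
        = μ * w r := by
    intro r hr1 hr2
    have hrS : r ∈ S := ⟨by linarith [Real.pi_pos], hr2⟩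
    rw [hderiv2_eq r hrS, hderiv_eq r hrS]
    have h1 := huode r hr1 hr2
    have h2 := hvode r hr1 hr2
    simp only [hwdef, Pi.sub_apply]
    ring_nf
    ring_nf at h1 h2
    linear_combination h1 - h2
  have key := key_vanish k μ w hw hw0 hw0' hwode
  intro r hr
  rcases le_or_gt 0 r with h | h
  · have h2 : u r - v r = 0 := key r h hr.2
    exact sub_eq_zero.mp h2
  · have h2 : w (-r) = 0 := key (-r) (by linarith) (by linarith [hr.1])
    rw [hweven r] at h2
    have h3 : u r - v r = 0 := h2
    exact sub_eq_zero.mp h3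
end

section
/- Let n ≥ 1 and t > 0, and define the (complexified) unwrapped heat kernel ν_t on ℂ ∖ πℤ by ν_t(z) = e^{t n²/2}·(L̃^n G_t)(z), where G_t(z) = e^{−z²/(2t)}/√(2πt) and (L̃g)(z) = −(1/(2π))·g′(z)/sin z. Then: (a) ν_t has a removable singularity at z = 0, i.e., it extends to a holomorphic function on ℂ ∖ { kπ : k ∈ ℤ, k ≠ 0 }; and (b) for every nonzero integer k, ν_t has a pole of order exactly 2n − 1 at kπ, i.e., the function z ↦ (z − kπ)^{2n−1}·ν_t(z) extends holomorphically to a neighborhood of kπ with nonzero value at kπ. -/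
/-- The operator `L̃` acting on functions of a complex variable:
`(L̃ g)(z) = -(1/(2π)) g'(z)/sin z`. -/
noncomputable def LsphC (g : ℂ → ℂ) : ℂ → ℂ :=
  fun z => -(1 / (2 * (Real.pi : ℂ))) * deriv g z / Complex.sin z

/-- The complexified unwrapped heat kernel of `S^{2n+1}`:
`ν_t(z) = e^{tn²/2} (L̃ⁿ G_t)(z)` with `G_t(z) = e^{-z²/(2t)}/√(2πt)`. -/
noncomputable def nuC (n : ℕ) (t : ℝ) : ℂ → ℂ :=
  fun z => (Real.exp (t * (n : ℝ) ^ 2 / 2) : ℂ) *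
    LsphC^[n] (fun w => Complex.exp (-(w ^ 2) / (2 * (t : ℂ)))
      / (Real.sqrt (2 * Real.pi * t) : ℂ)) z

open Complex Filter Function Set
open scoped Topology

noncomputable def Gt (t : ℝ) : ℂ → ℂ :=
  fun w => Complex.exp (-(w ^ 2) / (2 * (t : ℂ))) / (Real.sqrt (2 * Real.pi * t) : ℂ)

lemma analyticAt_dslope'' {f : ℂ → ℂ} {a : ℂ} (h : AnalyticAt ℂ f a) :
    AnalyticAt ℂ (dslope f a) a := by
  obtain ⟨p, hp⟩ := h
  exact ⟨p.fslope, hp.has_fpower_series_dslope_fslope⟩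

lemma dslope_eq_of_ne {f : ℂ → ℂ} {a z : ℂ} (hz : z ≠ a) :
    dslope f a z = (z - a)⁻¹ * (f z - f a) := by
  rw [dslope_of_ne f hz]; rfl

lemma cos_ne_zero_of_sin_eq_zero {a : ℂ} (h : Complex.sin a = 0) : Complex.cos a ≠ 0 := by
  intro hc
  have := Complex.sin_sq_add_cos_sq a
  rw [h, hc] at this
  simp at this

lemma Gt_hasDerivAt (t : ℝ) (ht : t ≠ 0) (z : ℂ) :
    HasDerivAt (Gt t) (-(z / t) * Gt t z) z := by
  have h1 : HasDerivAt (fun w : ℂ => -(w ^ 2) / (2 * (t : ℂ))) (-(2 * z) / (2 * t)) z := by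
    simpa [mul_comm] using ((hasDerivAt_pow 2 z).neg.div_const (2 * (t : ℂ)))
  have h2 := h1.cexp
  have h3 := h2.div_const (Real.sqrt (2 * Real.pi * t) : ℂ)
  refine HasDerivAt.congr_deriv h3 ?_
  have ht' : (t : ℂ) ≠ 0 := by exact_mod_cast ht
  unfold Gt
  field_simp

lemma Gt_differentiable (t : ℝ) (ht : t ≠ 0) : Differentiable ℂ (Gt t) :=
  fun z => (Gt_hasDerivAt t ht z).differentiableAt

lemma Gt_deriv (t : ℝ) (ht : t ≠ 0) (z : ℂ) : deriv (Gt t) z = -(z / t) * Gt t z :=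
  (Gt_hasDerivAt t ht z).deriv

lemma Gt_ne_zero (t : ℝ) (ht : 0 < t) (z : ℂ) : Gt t z ≠ 0 := by
  unfold Gt
  apply div_ne_zero (Complex.exp_ne_zero _)
  have : (0:ℝ) < Real.sqrt (2 * Real.pi * t) :=
    Real.sqrt_pos.mpr (by positivity)
  exact_mod_cast this.ne'

lemma deriv_entire {f : ℂ → ℂ} (hf : Differentiable ℂ f) : Differentiable ℂ (deriv f) := by
  have h := (analyticOnNhd_univ_iff_differentiable.mpr hf).deriv
  exact analyticOnNhd_univ_iff_differentiable.mp h

lemma repA (t : ℝ) (ht : 0 < t) (n : ℕ) (hn : 1 ≤ n) :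
    ∃ f : ℂ → ℂ, Differentiable ℂ f ∧
      (∀ k : ℤ, k ≠ 0 → f ((k : ℂ) * (Real.pi : ℂ)) ≠ 0) ∧
      ∀ z : ℂ, Complex.sin z ≠ 0 →
        LsphC^[n] (Gt t) z = f z / Complex.sin z ^ (2 * n - 1) := by
  induction n with
  | zero => omega
  | succ n ih =>
    rcases Nat.eq_or_lt_of_le hn with h1 | h1
    · -- n + 1 = 1
      have hn0 : n = 0 := by omega
      subst hn0
      refine ⟨fun w => -(1 / (2 * (Real.pi : ℂ))) * deriv (Gt t) w, ?_, ?_, ?_⟩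
      · exact (deriv_entire (Gt_differentiable t ht.ne')).const_mul _
      · intro k hk
        simp only
        rw [Gt_deriv t ht.ne']
        have hπ : (Real.pi : ℂ) ≠ 0 := by exact_mod_cast Real.pi_ne_zero
        have hk' : (k : ℂ) ≠ 0 := Int.cast_ne_zero.mpr hk
        have ht' : (t : ℂ) ≠ 0 := by exact_mod_cast ht.ne'
        apply mul_ne_zero
        · simp [hπ]
        · exact mul_ne_zero (by simp [hk', hπ, ht', div_eq_zero_iff]) (Gt_ne_zero t ht _)
      · intro z hz
        simp [LsphC, pow_one]
    · -- step, n ≥ 1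
      have hn' : 1 ≤ n := by omega
      obtain ⟨f, hf, hfk, hrep⟩ := ih hn'
      obtain ⟨m', hm'⟩ : ∃ m', 2 * n - 1 = m' + 1 := ⟨2 * n - 2, by omega⟩
      set m : ℕ := 2 * n - 1 with hm
      refine ⟨fun w => -(1 / (2 * (Real.pi : ℂ))) *
          (deriv f w * Complex.sin w - (m : ℂ) * f w * Complex.cos w), ?_, ?_, ?_⟩
      · apply Differentiable.const_mul
        exact ((deriv_entire hf).mul Complex.differentiable_sin).sub
          (((differentiable_const _).mul hf).mul Complex.differentiable_cos)
      · intro k hk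
        have hsin : Complex.sin ((k : ℂ) * (Real.pi : ℂ)) = 0 :=
          Complex.sin_eq_zero_iff.mpr ⟨k, rfl⟩
        have hcos := cos_ne_zero_of_sin_eq_zero hsin
        have hπ : (Real.pi : ℂ) ≠ 0 := by exact_mod_cast Real.pi_ne_zero
        have hmne : (m : ℂ) ≠ 0 := by
          exact_mod_cast (by omega : m ≠ 0)
        simp only
        rw [hsin]
        simp only [mul_zero, zero_sub, neg_mul, neg_ne_zero, mul_assoc]
        refine mul_ne_zero (by simp [hπ]) (neg_ne_zero.mpr ?_)
        exact mul_ne_zero hmne (mul_ne_zero (hfk k hk) hcos)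
      · intro z hz
        have hSopen : IsOpen {w : ℂ | Complex.sin w ≠ 0} :=
          isOpen_ne.preimage Complex.continuous_sin
        have hee : LsphC^[n] (Gt t) =ᶠ[𝓝 z] fun w => f w / Complex.sin w ^ m := by
          filter_upwards [hSopen.mem_nhds hz] with w hw using hrep w hw
        have hdd : HasDerivAt (fun w => f w / Complex.sin w ^ m)
            ((deriv f z * Complex.sin z ^ m -
              f z * ((m : ℂ) * Complex.sin z ^ (m - 1) * Complex.cos z)) /
              (Complex.sin z ^ m) ^ 2) z := by
          exact ((hf z).hasDerivAt).div ((Complex.hasDerivAt_sin z).pow m)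
            (pow_ne_zero m hz)
        have hiter : LsphC^[n+1] (Gt t) z = LsphC (LsphC^[n] (Gt t)) z := by
          rw [Function.iterate_succ_apply']
        rw [hiter]
        show -(1 / (2 * (Real.pi : ℂ))) * deriv (LsphC^[n] (Gt t)) z / Complex.sin z = _
        rw [hee.deriv_eq, hdd.deriv]
        have h2 : 2 * (n + 1) - 1 = m + 2 := by omega
        rw [h2]
        have hm1 : m - 1 = m' := by omega
        rw [hm1, hm']
        have hπ : (Real.pi : ℂ) ≠ 0 := by exact_mod_cast Real.pi_ne_zero
        field_simp
        ring

lemma repB (t : ℝ) (ht : 0 < t) (n : ℕ) :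
    ∃ φ : ℂ → ℂ, AnalyticAt ℂ φ 0 ∧ (∀ᶠ z in 𝓝 (0 : ℂ), φ (-z) = φ z) ∧
      ∀ᶠ z in 𝓝[≠] (0 : ℂ), φ z = LsphC^[n] (Gt t) z := by
  induction n with
  | zero =>
    refine ⟨Gt t, (Gt_differentiable t ht.ne').analyticAt 0, ?_, ?_⟩
    · filter_upwards with z
      simp [Gt, neg_sq]
    · filter_upwards with z
      simp
  | succ n ih =>
    obtain ⟨φ, hφ, hev, heq⟩ := ih
    -- open set U where φ is analytic and even
    obtain ⟨U, hUsub, hUopen, hU0⟩ := eventually_nhds_iff.mp (hev.and hφ.eventually_analyticAt)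
    set W : Set ℂ := U ∩ (-U) with hW
    have hWopen : IsOpen W := hUopen.inter (hUopen.neg)
    have hW0 : (0 : ℂ) ∈ W := ⟨hU0, by simpa using hU0⟩
    have hWsymm : ∀ z ∈ W, -z ∈ W := by
      rintro z ⟨h1, h2⟩
      exact ⟨by simpa using h2, by simpa using h1⟩
    have hWev : ∀ z ∈ W, φ (-z) = φ z := fun z hz => (hUsub z hz.1).1
    have hWan : ∀ z ∈ W, AnalyticAt ℂ φ z := fun z hz => (hUsub z hz.1).2
    -- deriv φ is odd on W
    have hodd : ∀ z ∈ W, deriv φ (-z) = -deriv φ z := by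
      intro z hz
      have han : AnalyticAt ℂ φ (-z) := hWan _ (hWsymm z hz)
      have hcomp : HasDerivAt (fun w => φ (-w)) (deriv φ (-z) * (-1)) z := by
        exact (han.differentiableAt.hasDerivAt).comp z (hasDerivAt_neg z)
      have heqz : (fun w => φ (-w)) =ᶠ[𝓝 z] φ := by
        filter_upwards [hWopen.mem_nhds hz] with w hw using hWev w hw
      have := heqz.deriv_eq
      rw [hcomp.deriv] at this
      linear_combination -this
    have hd0 : deriv φ 0 = 0 := by
      have h := hodd 0 hW0
      rw [neg_zero] at h
      linear_combination h / 2
    -- analyticity of deriv φ at 0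
    have hφd : AnalyticAt ℂ (deriv φ) 0 := by
      have : AnalyticOnNhd ℂ φ U := fun x hx => (hUsub x hx).2
      exact this.deriv 0 hU0
    have hsinan : AnalyticAt ℂ Complex.sin (0 : ℂ) :=
      Complex.differentiable_sin.analyticAt 0
    have hds0 : dslope Complex.sin 0 0 = 1 := by
      rw [dslope_same, Complex.deriv_sin, Complex.cos_zero]
    have hA1 : AnalyticAt ℂ (dslope (deriv φ) 0) 0 := analyticAt_dslope'' hφd
    have hA2 : AnalyticAt ℂ (dslope Complex.sin 0) 0 := analyticAt_dslope'' hsinan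
    set φ' : ℂ → ℂ := fun z =>
      -(1 / (2 * (Real.pi : ℂ))) * (dslope (deriv φ) 0 z * (dslope Complex.sin 0 z)⁻¹)
      with hφ'def
    have hA : AnalyticAt ℂ φ' 0 := by
      apply AnalyticAt.mul analyticAt_const
      exact hA1.mul (hA2.inv (by rw [hds0]; norm_num))
    -- eventually dslope sin ≠ 0
    have hsne : ∀ᶠ z in 𝓝 (0 : ℂ), dslope Complex.sin 0 z ≠ 0 :=
      hA2.continuousAt.eventually_ne (by rw [hds0]; norm_num)
    -- key pointwise formulas for z ≠ 0
    have hds_sin : ∀ z : ℂ, z ≠ 0 → dslope Complex.sin 0 z = z⁻¹ * Complex.sin z := by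
      intro z hz
      rw [dslope_eq_of_ne hz]; simp
    have hds_dφ : ∀ z : ℂ, z ≠ 0 → dslope (deriv φ) 0 z = z⁻¹ * deriv φ z := by
      intro z hz
      rw [dslope_eq_of_ne hz, hd0]; simp
    refine ⟨φ', hA, ?_, ?_⟩
    · -- evenness of φ'
      filter_upwards [hWopen.mem_nhds hW0] with z hzW
      rcases eq_or_ne z 0 with rfl | hz
      · norm_num
      have hnz : -z ≠ 0 := neg_ne_zero.mpr hz
      rw [hφ'def]
      simp only
      rw [hds_sin _ hz, hds_sin _ hnz, hds_dφ _ hz, hds_dφ _ hnz,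
        Complex.sin_neg, hodd z hzW]
      field_simp
    · -- agreement with LsphC^[n+1] on punctured nbhd
      obtain ⟨V, hVsub, hVopen, hV0⟩ :=
        eventually_nhds_iff.mp (eventually_nhdsWithin_iff.mp heq)
      have hmemV : V ∈ 𝓝 (0:ℂ) := hVopen.mem_nhds hV0
      rw [eventually_nhdsWithin_iff]
      filter_upwards [hmemV, hsne] with z hzV hzs
      intro hz0
      have hz : z ≠ 0 := by simpa using hz0
      -- sin z ≠ 0
      have hsinz : Complex.sin z ≠ 0 := by
        intro h
        rw [hds_sin z hz, h, mul_zero] at hzs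
        exact hzs rfl
      -- deriv (LsphC^[n] (Gt t)) z = deriv φ z
      have heqz : φ =ᶠ[𝓝 z] LsphC^[n] (Gt t) := by
        filter_upwards [(hVopen.inter isOpen_ne).mem_nhds ⟨hzV, hz⟩] with w hw
        exact hVsub w hw.1 (by simpa using hw.2)
      have hderiv_eq : deriv (LsphC^[n] (Gt t)) z = deriv φ z := heqz.symm.deriv_eq
      rw [Function.iterate_succ_apply']
      show φ' z = -(1 / (2 * (Real.pi : ℂ))) * deriv (LsphC^[n] (Gt t)) z / Complex.sin z
      rw [hderiv_eq, hφ'def]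
      simp only
      rw [hds_sin z hz, hds_dφ z hz]
      field_simp

/-- The unwrapped heat kernel has a removable singularity at `0` and a pole of
order exactly `2n - 1` at each nonzero integer multiple of `π`. -/
theorem stmt_18 (n : ℕ) (hn : 1 ≤ n) (t : ℝ) (ht : 0 < t) :
    (∃ h : ℂ → ℂ,
      (∀ z : ℂ, (∀ k : ℤ, k ≠ 0 → z ≠ (k : ℂ) * (Real.pi : ℂ)) → DifferentiableAt ℂ h z) ∧
      (∀ z : ℂ, (∀ k : ℤ, z ≠ (k : ℂ) * (Real.pi : ℂ)) → h z = nuC n t z)) ∧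
    (∀ k : ℤ, k ≠ 0 → ∃ g : ℂ → ℂ,
      AnalyticAt ℂ g ((k : ℂ) * (Real.pi : ℂ)) ∧
      g ((k : ℂ) * (Real.pi : ℂ)) ≠ 0 ∧
      ∀ᶠ z in nhdsWithin ((k : ℂ) * (Real.pi : ℂ)) {((k : ℂ) * (Real.pi : ℂ))}ᶜ,
        g z = (z - (k : ℂ) * (Real.pi : ℂ)) ^ (2 * n - 1) * nuC n t z) := by
  set E : ℂ := (Real.exp (t * (n : ℝ) ^ 2 / 2) : ℂ) with hEdef
  have hE : E ≠ 0 := by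
    rw [hEdef]
    exact_mod_cast Real.exp_ne_zero _
  have hnu : ∀ z : ℂ, nuC n t z = E * LsphC^[n] (Gt t) z := fun z => rfl
  obtain ⟨f, hf, hfk, hrep⟩ := repA t ht n hn
  obtain ⟨φ, hφ, hev, heq⟩ := repB t ht n
  set m : ℕ := 2 * n - 1 with hm
  have hSopen : IsOpen {w : ℂ | Complex.sin w ≠ 0} :=
    isOpen_ne.preimage Complex.continuous_sin
  constructor
  · -- removable singularity at 0
    refine ⟨Function.update (nuC n t) 0 (E * φ 0), ?_, ?_⟩
    · intro z hz
      by_cases hz0 : z = 0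
      · subst hz0
        obtain ⟨V, hVsub, hVopen, hV0⟩ :=
          eventually_nhds_iff.mp (eventually_nhdsWithin_iff.mp heq)
        have hee : Function.update (nuC n t) 0 (E * φ 0) =ᶠ[𝓝 (0:ℂ)] fun w => E * φ w := by
          filter_upwards [hVopen.mem_nhds hV0] with w hw
          rcases eq_or_ne w 0 with rfl | hw0
          · simp
          · rw [Function.update_of_ne hw0, hnu w, hVsub w hw (by simpa using hw0)]
        exact hee.differentiableAt_iff.mpr ((hφ.differentiableAt).const_mul E)
      · have hsin : Complex.sin z ≠ 0 := by
          intro h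
          obtain ⟨k, hk⟩ := Complex.sin_eq_zero_iff.mp h
          rcases eq_or_ne k 0 with rfl | hk0
          · apply hz0; simpa using hk
          · exact hz k hk0 hk
        have hee : Function.update (nuC n t) 0 (E * φ 0) =ᶠ[𝓝 z]
            fun w => E * (f w / Complex.sin w ^ m) := by
          filter_upwards [(hSopen.inter isOpen_ne).mem_nhds ⟨hsin, hz0⟩] with w hw
          rw [Function.update_of_ne hw.2, hnu w, hrep w hw.1]
        refine hee.differentiableAt_iff.mpr ?_
        exact (((hf z).div ((Complex.differentiable_sin z).pow m)
          (pow_ne_zero m hsin))).const_mul E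
    · intro z hz
      have hz0 : z ≠ 0 := by simpa using hz 0
      rw [Function.update_of_ne hz0]
  · -- poles at nonzero multiples of π
    intro k hk
    set a : ℂ := (k : ℂ) * (Real.pi : ℂ) with ha
    have hsina : Complex.sin a = 0 := Complex.sin_eq_zero_iff.mpr ⟨k, rfl⟩
    have hcos : Complex.cos a ≠ 0 := cos_ne_zero_of_sin_eq_zero hsina
    have hA2 : AnalyticAt ℂ (dslope Complex.sin a) a :=
      analyticAt_dslope'' (Complex.differentiable_sin.analyticAt a)
    have hdsa : dslope Complex.sin a a = Complex.cos a := by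
      rw [dslope_same, Complex.deriv_sin]
    refine ⟨fun z => E * f z / (dslope Complex.sin a z) ^ m, ?_, ?_, ?_⟩
    · exact (analyticAt_const.mul (hf.analyticAt a)).div (hA2.pow m)
        (by rw [hdsa]; exact pow_ne_zero _ hcos)
    · simp only
      rw [hdsa]
      exact div_ne_zero (mul_ne_zero hE (hfk k hk)) (pow_ne_zero _ hcos)
    · have hne : ∀ᶠ z in 𝓝 a, dslope Complex.sin a z ≠ 0 :=
        hA2.continuousAt.eventually_ne (by rw [hdsa]; exact hcos)
      rw [eventually_nhdsWithin_iff]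
      filter_upwards [hne] with z hzs hz0
      have hza : z ≠ a := by simpa using hz0
      have hsub : z - a ≠ 0 := sub_ne_zero.mpr hza
      have hsz : Complex.sin z = (z - a) * dslope Complex.sin a z := by
        rw [dslope_eq_of_ne hza, hsina]
        field_simp
        simp
      have hsinz : Complex.sin z ≠ 0 := by
        rw [hsz]; exact mul_ne_zero hsub hzs
      rw [hnu z, hrep z hsinz, hsz]
      rw [mul_pow]
      field_simp
end
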